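/- Under the substitution z = v/(1+v+v²), the power series Q (satisfying Q = z + zQ + zQ²) becomes v: that is, in ℚ[[v]], Q(v/(1+v+v²)) = v. -/

import Mathlib

open PowerSeries

/-- Composition g ∘ f of formal power series (meaningful when constantCoeff f = 0):
the n-th coefficient is Σ_{k≤n} (coeff k g) · (coeff n f^k). -/
noncomputable def psComp (g f : PowerSeries ℚ) : PowerSeries ℚ :=
  PowerSeries.mk fun n =>
    ∑ k ∈ Finset.range (n + 1), (coeff k g) * (coeff n (f ^ k))

lemma coeff_psComp (g f : PowerSeries ℚ) (n : ℕ) :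
    coeff n (psComp g f) = ∑ k ∈ Finset.range (n + 1), (coeff k g) * (coeff n (f ^ k)) := by
  simp [psComp]

lemma pow_vanish {f : PowerSeries ℚ} (hf : constantCoeff f = 0)
    {k n : ℕ} (hnk : n < k) : coeff n (f ^ k) = 0 := by
  obtain ⟨h, rfl⟩ := X_dvd_iff.mpr hf
  rw [mul_pow, coeff_X_pow_mul', if_neg (not_le.mpr hnk)]

lemma psComp_add (g₁ g₂ f : PowerSeries ℚ) :
    psComp (g₁ + g₂) f = psComp g₁ f + psComp g₂ f := by
  ext n
  simp [coeff_psComp, add_mul, Finset.sum_add_distrib]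

lemma psComp_X {f : PowerSeries ℚ} (hf : constantCoeff f = 0) :
    psComp X f = f := by
  ext n
  rw [coeff_psComp, Finset.sum_eq_single 1]
  · simp
  · intro b _ hb
    simp [coeff_X, hb]
  · intro h1
    have hn : n = 0 := by
      rw [Finset.mem_range] at h1; omega
    subst hn
    simp [hf]

lemma psComp_mul {f : PowerSeries ℚ} (hf : constantCoeff f = 0) (g h : PowerSeries ℚ) :
    psComp (g * h) f = psComp g f * psComp h f := by
  ext n
  rw [coeff_psComp, coeff_mul]
  set P := Finset.range (n + 1) ×ˢ Finset.range (n + 1) with hP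
  have hfilter : ∀ k ∈ Finset.range (n + 1),
      Finset.HasAntidiagonal.antidiagonal k = P.filter (fun p => p.1 + p.2 = k) := by
    intro k hk
    rw [Finset.mem_range] at hk
    ext ⟨a, b⟩
    simp only [Finset.HasAntidiagonal.mem_antidiagonal, Finset.mem_filter, hP, Finset.mem_product,
      Finset.mem_range]
    constructor
    · rintro rfl; exact ⟨⟨by omega, by omega⟩, rfl⟩
    · exact fun ⟨_, e⟩ => e
  have hL : ∑ k ∈ Finset.range (n + 1), (coeff k (g * h)) * (coeff n (f ^ k))
      = ∑ p ∈ P, (coeff p.1 g) * (coeff p.2 h) * coeff n (f ^ (p.1 + p.2)) := by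
    calc ∑ k ∈ Finset.range (n + 1), (coeff k (g * h)) * (coeff n (f ^ k))
        = ∑ k ∈ Finset.range (n + 1), ∑ p ∈ P, (if p.1 + p.2 = k then
            (coeff p.1 g) * (coeff p.2 h) * coeff n (f ^ (p.1 + p.2)) else 0) := by
          refine Finset.sum_congr rfl fun k hk => ?_
          rw [Finset.sum_ite, Finset.sum_const_zero, add_zero,
            ← hfilter k hk, coeff_mul, Finset.sum_mul]
          exact Finset.sum_congr rfl fun p hp => by
            rw [Finset.HasAntidiagonal.mem_antidiagonal] at hp
            rw [hp]
      _ = ∑ p ∈ P, ∑ k ∈ Finset.range (n + 1), (if p.1 + p.2 = k then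
            (coeff p.1 g) * (coeff p.2 h) * coeff n (f ^ (p.1 + p.2)) else 0) :=
          Finset.sum_comm
      _ = ∑ p ∈ P, (coeff p.1 g) * (coeff p.2 h) * coeff n (f ^ (p.1 + p.2)) := by
          refine Finset.sum_congr rfl fun p hp => ?_
          rw [Finset.sum_ite_eq (Finset.range (n + 1)) (p.1 + p.2)]
          by_cases hc : p.1 + p.2 ∈ Finset.range (n + 1)
          · rw [if_pos hc]
          · rw [if_neg hc]
            rw [Finset.mem_range] at hc
            rw [pow_vanish hf (by omega), mul_zero]
  rw [hL]
  -- RHS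
  have hR : ∀ p : ℕ × ℕ, p ∈ Finset.HasAntidiagonal.antidiagonal n →
      coeff p.1 (psComp g f) * coeff p.2 (psComp h f)
      = ∑ q ∈ P, (coeff q.1 g) * (coeff p.1 (f ^ q.1))
          * ((coeff q.2 h) * (coeff p.2 (f ^ q.2))) := by
    rintro ⟨i, j⟩ hij
    rw [Finset.HasAntidiagonal.mem_antidiagonal] at hij
    rw [coeff_psComp, coeff_psComp]
    have hi : Finset.range (i + 1) ⊆ Finset.range (n + 1) := by
      apply Finset.range_subset_range.mpr; omega
    have hj : Finset.range (j + 1) ⊆ Finset.range (n + 1) := by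
      apply Finset.range_subset_range.mpr; omega
    rw [Finset.sum_subset hi (fun a _ ha => by
        rw [Finset.mem_range, not_lt] at ha
        rw [pow_vanish hf (by omega), mul_zero]),
      Finset.sum_subset hj (fun b _ hb => by
        rw [Finset.mem_range, not_lt] at hb
        rw [pow_vanish hf (by omega), mul_zero]),
      Finset.sum_mul_sum]
    rw [hP, Finset.sum_product]
  rw [Finset.sum_congr rfl hR, Finset.sum_comm]
  refine Finset.sum_congr rfl fun q hq => ?_
  have : coeff n (f ^ (q.1 + q.2)) = ∑ p ∈ Finset.HasAntidiagonal.antidiagonal n,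
      coeff p.1 (f ^ q.1) * coeff p.2 (f ^ q.2) := by
    rw [pow_add, coeff_mul]
  rw [this, Finset.mul_sum]
  exact Finset.sum_congr rfl fun p hp => by ring


/-- Under the substitution z = v/(1+v+v²), the series Q (with Q = z + zQ + zQ², Q(0)=0)
becomes v. -/
theorem Q_subst_eq
    (Q : PowerSeries ℚ)
    (hQ0 : constantCoeff Q = 0)
    (hQ : Q = X + X * Q + X * Q ^ 2) :
    psComp Q (X * (1 + X + X ^ 2)⁻¹) = X := by
  set f : PowerSeries ℚ := X * (1 + X + X ^ 2)⁻¹ with hfdef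
  have hu : constantCoeff (1 + X + X ^ 2 : PowerSeries ℚ) = 1 := by simp
  have hf0 : constantCoeff f = 0 := by
    rw [hfdef, map_mul, constantCoeff_X, zero_mul]
  have hfX : f * (1 + X + X ^ 2) = X := by
    rw [hfdef, mul_assoc, PowerSeries.inv_mul_cancel _ (by rw [hu]; norm_num), mul_one]
  set R : PowerSeries ℚ := psComp Q f with hRdef
  have hR : R = f + f * R + f * (R * R) := by
    conv_lhs => rw [hRdef, hQ]
    rw [psComp_add, psComp_add, psComp_mul hf0, psComp_mul hf0, psComp_X hf0,
      pow_two, psComp_mul hf0]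
  have hX : (X : PowerSeries ℚ) = f + f * X + f * (X * X) := by
    have := hfX
    ring_nf at this ⊢
    linear_combination -this
  have hkey : (R - X) * (1 - f * (1 + R + X)) = 0 := by
    linear_combination hR - hX
  rcases mul_eq_zero.mp hkey with h | h
  · exact sub_eq_zero.mp h
  · exfalso
    have := congrArg (constantCoeff) h
    simp [hf0] at this
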